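/- Assume the static planning LP (minimize ρ s.t. Rx = λ, Ax ≤ eρ, x ≥ 0) has a UNIQUE optimal solution (ρ*, x*) with ρ* = 1 and Ax* = e. Suppose δ ∈ ℝ^m and t > 0 are such that there exist x, x' ≥ 0 with Ax ≤ e, Ax' ≤ e, Rx = λ − (1/t)δ, Rx' = λ + (1/t)δ. Then the vector y = t(x* − x) satisfies Ry = δ, Ay = 0, and y_j = 0 for every j with x*_j = 0. -/

import Mathlib

open Matrix

/-- Converse direction. If λ − (1/t)δ and λ + (1/t)δ are both
achievable input rates, then y = t(x* − x) satisfies Ry = δ, Ay = 0 and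
y_j = 0 for all nonbasic j. -/
theorem stmt_6 {m n r : ℕ} (R : Matrix (Fin m) (Fin n) ℝ)
    (A : Matrix (Fin r) (Fin n) ℝ) (hA : ∀ i j, 0 ≤ A i j)
    (lam : Fin m → ℝ) (hlam : 0 ≤ lam)
    (xstar : Fin n → ℝ)
    (hxpos : 0 ≤ xstar) (hRx : R.mulVec xstar = lam)
    (hAx : ∀ k, A.mulVec xstar k = 1)
    (hopt : ∀ (ρ : ℝ) (x : Fin n → ℝ), 0 ≤ x → R.mulVec x = lam →
      (∀ k, A.mulVec x k ≤ ρ) → 1 ≤ ρ)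
    (huniq : ∀ x : Fin n → ℝ, 0 ≤ x → R.mulVec x = lam →
      (∀ k, A.mulVec x k ≤ 1) → x = xstar)
    (δ : Fin m → ℝ) (t : ℝ) (ht : 0 < t)
    (x x' : Fin n → ℝ) (hx : 0 ≤ x) (hx' : 0 ≤ x')
    (hAxle : ∀ k, A.mulVec x k ≤ 1) (hAx'le : ∀ k, A.mulVec x' k ≤ 1)
    (hRxeq : R.mulVec x = lam - (1 / t) • δ)
    (hRx'eq : R.mulVec x' = lam + (1 / t) • δ) :
    R.mulVec (t • (xstar - x)) = δ ∧ A.mulVec (t • (xstar - x)) = 0 ∧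
      ∀ j, xstar j = 0 → (t • (xstar - x)) j = 0 := by
  set x'' : Fin n → ℝ := (1/2 : ℝ) • (x + x') with hx''def
  have hx''nn : 0 ≤ x'' := by
    intro j
    have := hx j; have := hx' j
    simp only [hx''def, Pi.smul_apply, Pi.add_apply, smul_eq_mul]
    linarith
  have hRx'' : R.mulVec x'' = lam := by
    simp only [hx''def, Matrix.mulVec_smul, Matrix.mulVec_add, hRxeq, hRx'eq]
    funext i
    simp only [Pi.smul_apply, Pi.add_apply, Pi.sub_apply, smul_eq_mul]
    ring
  have hAx'' : ∀ k, A.mulVec x'' k ≤ 1 := by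
    intro k
    have h1 := hAxle k; have h2 := hAx'le k
    simp only [hx''def, Matrix.mulVec_smul, Matrix.mulVec_add]
    simp only [Pi.smul_apply, Pi.add_apply, smul_eq_mul]
    linarith
  have heq : x'' = xstar := huniq x'' hx''nn hRx'' hAx''
  -- Ax = e
  have hAxeq : ∀ k, A.mulVec x k = 1 := by
    intro k
    have h : A.mulVec x'' k = 1 := by rw [heq]; exact hAx k
    have h1 := hAxle k; have h2 := hAx'le k
    simp only [hx''def, Matrix.mulVec_smul, Matrix.mulVec_add,
      Pi.smul_apply, Pi.add_apply, smul_eq_mul] at h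
    linarith
  refine ⟨?_, ?_, ?_⟩
  · funext i
    have h1 : R.mulVec x i = lam i - (1/t) * δ i := by
      rw [hRxeq]; simp
    simp only [Matrix.mulVec_smul, Matrix.mulVec_sub, hRx, Pi.smul_apply,
      Pi.sub_apply, smul_eq_mul, h1]
    field_simp
    ring
  · funext k
    have h1 := hAx k; have h2 := hAxeq k
    simp only [Matrix.mulVec_smul, Matrix.mulVec_sub, Pi.smul_apply,
      Pi.sub_apply, smul_eq_mul, h1, h2, Pi.zero_apply]
    ring
  · intro j hj
    have hxj : x j = 0 := by
      have h : x'' j = xstar j := by rw [heq]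
      simp only [hx''def, Pi.smul_apply, Pi.add_apply, smul_eq_mul, hj] at h
      have h1 : (0:ℝ) ≤ x j := hx j
      have h2 : (0:ℝ) ≤ x' j := hx' j
      linarith
    simp [hj, hxj]
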